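/- Let θ ∈ (π/2, π) and let γ₁ > 0 and γ₂ > 0 be real numbers. Then for every nonzero complex number z with |arg z| ≤ π − θ one has γ₁|z| + γ₂ ≤ |γ₁ z + γ₂| / sin(θ/2). -/

import Mathlib

open Real Complex

/-- Sector inequality (Lemma 4.1): for θ ∈ (π/2, π), γ₁, γ₂ > 0 and z ≠ 0 with
|arg z| ≤ π − θ, one has γ₁|z| + γ₂ ≤ |γ₁ z + γ₂| / sin(θ/2). -/
theorem stmt_0 (θ γ₁ γ₂ : ℝ) (hθ : θ ∈ Set.Ioo (Real.pi / 2) Real.pi)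
    (hγ₁ : 0 < γ₁) (hγ₂ : 0 < γ₂) (z : ℂ) (hz : z ≠ 0)
    (harg : |z.arg| ≤ Real.pi - θ) :
    γ₁ * ‖z‖ + γ₂ ≤
      ‖(γ₁ : ℂ) * z + (γ₂ : ℂ)‖ / Real.sin (θ / 2) := by
  obtain ⟨hθ1, hθ2⟩ := hθ
  have hpi := Real.pi_pos
  set r := ‖z‖ with hr_def
  have hr : 0 < r := norm_pos_iff.mpr hz
  set φ := z.arg with hφ_def
  have hre : z.re = r * Real.cos φ := (Complex.norm_mul_cos_arg z).symm
  have him : z.im = r * Real.sin φ := (Complex.norm_mul_sin_arg z).symm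
  set s := Real.sin (θ / 2) with hs_def
  have hs : 0 < s := Real.sin_pos_of_pos_of_lt_pi (by linarith) (by linarith)
  have hs1 : s ≤ 1 := Real.sin_le_one _
  have hcos : Real.cos (Real.pi - θ) ≤ Real.cos φ := by
    rw [← Real.cos_abs φ]
    exact Real.cos_le_cos_of_nonneg_of_le_pi (abs_nonneg _) (by linarith) harg
  have hcosθ : Real.cos θ = 1 - 2 * s ^ 2 := by
    have h1 := Real.sin_sq (θ / 2)
    have h2 := Real.cos_sq (θ / 2)
    have h3 : 2 * (θ / 2) = θ := by ring
    rw [h3] at h2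
    rw [← hs_def] at h1
    linarith
  have hcos' : 2 * s ^ 2 - 1 ≤ Real.cos φ := by
    rw [Real.cos_pi_sub, hcosθ] at hcos; linarith
  have hyp : Real.sin φ ^ 2 + Real.cos φ ^ 2 = 1 := Real.sin_sq_add_cos_sq φ
  have hnormSq : Complex.normSq ((γ₁ : ℂ) * z + (γ₂ : ℂ)) =
      γ₁ ^ 2 * r ^ 2 + γ₂ ^ 2 + 2 * γ₁ * γ₂ * r * Real.cos φ := by
    simp only [Complex.normSq_apply, Complex.add_re, Complex.add_im, Complex.mul_re,
      Complex.mul_im, Complex.ofReal_re, Complex.ofReal_im, hre, him]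
    linear_combination (γ₁ ^ 2 * r ^ 2) * hyp
  have hsq : ((γ₁ * r + γ₂) * s) ^ 2 ≤
      (‖(γ₁ : ℂ) * z + (γ₂ : ℂ)‖) ^ 2 := by
    rw [Complex.sq_norm, hnormSq]
    nlinarith [mul_pos (mul_pos hγ₁ hγ₂) hr, sq_nonneg (γ₁ * r - γ₂),
      mul_nonneg (mul_nonneg (sq_nonneg (γ₁ * r - γ₂)) (sub_nonneg.mpr hs1))
        (by linarith : (0:ℝ) ≤ 1 + s)]
  have hA : 0 ≤ (γ₁ * r + γ₂) * s := by positivity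
  have hB : 0 ≤ ‖(γ₁ : ℂ) * z + (γ₂ : ℂ)‖ := norm_nonneg _
  have hle : (γ₁ * r + γ₂) * s ≤ ‖(γ₁ : ℂ) * z + (γ₂ : ℂ)‖ := by
    nlinarith
  rw [le_div_iff₀ hs]
  exact hle
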